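/- Let H be a complex separable Hilbert space and A a compact operator on H. Then A belongs to the class T: for every pair of closed subspaces H₁ ⊆ H₂ of H, each invariant under A, with dim(H₂ ⊖ H₁) > 1, there exists a closed subspace H₃ invariant under A with H₁ ⊆ H₃ ⊆ H₂, H₃ ≠ H₁, and H₃ ≠ H₂. -/

import Mathlib

open Submodule Filter Topology Polynomial
open scoped NNReal ENNReal

section Aux

variable {W : Type*} [NormedAddCommGroup W] [InnerProductSpace ℂ W]


lemma closure_invariant (B : W →L[ℂ] W) (p : Submodule ℂ W) (hp : ∀ x ∈ p, B x ∈ p) :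
    ∀ x ∈ p.topologicalClosure, B x ∈ p.topologicalClosure := by
  intro x hx
  have h1 : B x ∈ closure (B '' (p : Set W)) :=
    image_closure_subset_closure_image B.continuous ⟨x, hx, rfl⟩
  have h2 : closure (B '' (p : Set W)) ⊆ closure (p : Set W) := by
    apply closure_mono
    rintro _ ⟨y, hy, rfl⟩
    exact hp y hy
  exact h2 h1

lemma orbit_invariant (B : W →L[ℂ] W) (y : W) :
    ∀ x ∈ Submodule.span ℂ (Set.range fun n : ℕ => (B ^ n) y),
      B x ∈ Submodule.span ℂ (Set.range fun n : ℕ => (B ^ n) y) := by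
  intro x hx
  induction hx using Submodule.span_induction with
  | mem z hz =>
      obtain ⟨n, rfl⟩ := hz
      apply Submodule.subset_span
      refine ⟨n + 1, ?_⟩
      show (B ^ (n + 1)) y = B ((B ^ n) y)
      rw [pow_succ']
      rfl
  | zero => simp
  | add a b _ _ ha hb => simpa [map_add] using Submodule.add_mem _ ha hb
  | smul c a _ ha => simpa [map_smul] using Submodule.smul_mem _ c ha

lemma span_singleton_ne_top {y : W} (hrank : 1 < Module.rank ℂ W) :
    Submodule.span ℂ {y} ≠ ⊤ := by
  intro h
  have h1 : Module.rank ℂ (Submodule.span ℂ ({y} : Set W)) ≤ 1 := by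
    simpa using rank_span_le (R := ℂ) (M := W) {y}
  rw [h, rank_top] at h1
  exact absurd hrank (not_lt.mpr h1)


lemma eigen_dichotomy [CompleteSpace W] [Nontrivial W] (B : W →L[ℂ] W)
    (hB : IsCompactOperator (⇑B))
    {lam : ℂ} (hne : lam ≠ 0) (hmem : lam ∈ spectrum ℂ B) :
    (∃ y : W, y ≠ 0 ∧ B y = lam • y) ∨
      ∃ M : Submodule ℂ W, IsClosed (M : Set W) ∧ (∀ x ∈ M, B x ∈ M) ∧ M ≠ ⊥ ∧ M ≠ ⊤ := by
  by_cases hev : ∃ y : W, y ≠ 0 ∧ B y = lam • y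
  · exact Or.inl hev
  right
  push_neg at hev
  set T : W →L[ℂ] W := B - lam • 1 with hTdef
  have hTx : ∀ x, T x = B x - lam • x := fun x => by
    simp [hTdef, ContinuousLinearMap.sub_apply, ContinuousLinearMap.smul_apply]
  have hbb : ∃ c > (0:ℝ), ∀ x, c * ‖x‖ ≤ ‖T x‖ := by
    by_contra hc
    push_neg at hc
    have hseq : ∀ n : ℕ, ∃ u : W, ‖u‖ = 1 ∧ ‖T u‖ < 1 / (n + 1) := by
      intro n
      obtain ⟨x, hx⟩ := hc (1 / (n + 1 : ℝ)) (by positivity)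
      have hx0 : x ≠ 0 := by
        rintro rfl; simp at hx
      refine ⟨((‖x‖ : ℂ))⁻¹ • x, ?_, ?_⟩
      · rw [norm_smul]; simp [norm_ne_zero_iff.mpr hx0]
      · have hxn : (0:ℝ) < ‖x‖ := norm_pos_iff.mpr hx0
        rw [map_smul, norm_smul]
        simp only [norm_inv, Complex.norm_real, norm_norm]
        calc ‖x‖⁻¹ * ‖T x‖ < ‖x‖⁻¹ * (1 / (n+1) * ‖x‖) := by
              apply mul_lt_mul_of_pos_left hx (by positivity)
          _ = 1 / (n + 1) := by field_simp
    choose u hu1 hu2 using hseq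
    -- compactness
    have hcomp : IsCompact (closure (⇑B '' Metric.closedBall 0 1)) := by
      apply hB.isCompact_closure_image_of_bounded
      exact Metric.isBounded_closedBall
    have hmemim : ∀ n, B (u n) ∈ closure (⇑B '' Metric.closedBall 0 1) := by
      intro n
      apply subset_closure
      exact ⟨u n, by simp [Metric.mem_closedBall, dist_zero_right, (hu1 n).le], rfl⟩
    obtain ⟨z, -, φ, hφ, hz⟩ := hcomp.tendsto_subseq hmemim
    have hT0 : Tendsto (fun n => T (u (φ n))) atTop (𝓝 0) := by
      rw [tendsto_iff_norm_sub_tendsto_zero]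
      simp only [sub_zero]
      apply squeeze_zero (fun n => norm_nonneg _)
        (fun n => le_of_lt (lt_of_lt_of_le (hu2 (φ n)) ?_))
      · exact tendsto_one_div_add_atTop_nhds_zero_nat
      · have h3 : (n:ℝ) + 1 ≤ (φ n : ℝ) + 1 := by
          have h4 := hφ.le_apply (x := n)
          have : (n:ℝ) ≤ (φ n : ℝ) := by exact_mod_cast h4
          linarith
        apply one_div_le_one_div_of_le (by positivity) h3
    have huφ : Tendsto (fun n => u (φ n)) atTop (𝓝 (lam⁻¹ • z)) := by
      have h1 : ∀ n, u (φ n) = lam⁻¹ • (B (u (φ n)) - T (u (φ n))) := by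
        intro n
        rw [hTx]
        rw [sub_sub_cancel, smul_smul, inv_mul_cancel₀ hne, one_smul]
      have h2 : Tendsto (fun n => lam⁻¹ • (B (u (φ n)) - T (u (φ n)))) atTop
          (𝓝 (lam⁻¹ • (z - 0))) := (hz.sub hT0).const_smul lam⁻¹
      rw [sub_zero] at h2
      exact h2.congr fun n => (h1 n).symm
    set y := lam⁻¹ • z with hy
    have hyn : ‖y‖ = 1 := by
      exact tendsto_nhds_unique huφ.norm
        (tendsto_const_nhds.congr fun n => (hu1 (φ n)).symm)
    have hBy : B y = z := tendsto_nhds_unique ((B.continuous.tendsto _).comp huφ) hz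
    have hy0 : y ≠ 0 := by intro h; rw [h, norm_zero] at hyn; norm_num at hyn
    refine hev y hy0 ?_
    rw [hBy, hy, smul_smul, mul_inv_cancel₀ hne, one_smul]
  obtain ⟨c, hc0, hc⟩ := hbb
  -- T is antilipschitz, so its range is closed
  have hanti : AntilipschitzWith (⟨c, hc0.le⟩ : ℝ≥0)⁻¹ ⇑T := by
    apply ContinuousLinearMap.antilipschitz_of_bound
    intro x
    have h5 := hc x
    have h6 : ‖x‖ = c⁻¹ * (c * ‖x‖) := by field_simp
    have h7 : ((((⟨c, hc0.le⟩ : ℝ≥0))⁻¹ : ℝ≥0) : ℝ) = c⁻¹ := by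
      exact NNReal.coe_inv _
    rw [h7, h6]
    exact mul_le_mul_of_nonneg_left h5 (by positivity)
  have hclosed : IsClosed (Set.range ⇑T) :=
    hanti.isClosed_range T.uniformContinuous
  have hinj : Function.Injective ⇑T := hanti.injective
  refine ⟨LinearMap.range (T : W →ₗ[ℂ] W), ?_, ?_, ?_, ?_⟩
  · have : ((LinearMap.range (T : W →ₗ[ℂ] W) : Submodule ℂ W) : Set W) = Set.range ⇑T := by
      ext x; simp [LinearMap.mem_range]
    rw [this]; exact hclosed
  · rintro x ⟨z, rfl⟩
    refine ⟨B z, ?_⟩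
    have hcomm : T (B z) = B (T z) := by
      simp only [hTx, map_sub, map_smul]
    exact hcomm
  · intro hbot
    obtain ⟨w, hw⟩ := exists_ne (0 : W)
    refine hev w hw ?_
    have : T w = 0 := by
      have : T w ∈ (LinearMap.range (T : W →ₗ[ℂ] W) : Submodule ℂ W) := ⟨w, rfl⟩
      rwa [hbot, Submodule.mem_bot] at this
    rw [hTx] at this
    linear_combination (norm := module) this
  · intro htop
    have hbij : Function.Bijective ⇑T := by
      refine ⟨hinj, fun y => ?_⟩
      have : y ∈ (LinearMap.range (T : W →ₗ[ℂ] W) : Submodule ℂ W) := htop ▸ Submodule.mem_top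
      exact this
    have hunit : IsUnit T := ContinuousLinearMap.isUnit_iff_bijective.mpr hbij
    have : IsUnit (algebraMap ℂ (W →L[ℂ] W) lam - B) := by
      have : algebraMap ℂ (W →L[ℂ] W) lam - B = -T := by
        rw [hTdef, Algebra.algebraMap_eq_smul_one, neg_sub]
      rw [this]
      exact hunit.neg
    exact (spectrum.mem_iff.mp hmem) this


lemma orbit_poly {B : W →L[ℂ] W} {y v : W}
    (hv : v ∈ Submodule.span ℂ (Set.range fun n : ℕ => (B ^ n) y)) :
    ∃ p : ℂ[X], (aeval B p) y = v := by
  induction hv using Submodule.span_induction with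
  | mem z hz =>
      obtain ⟨n, rfl⟩ := hz
      exact ⟨X ^ n, by simp⟩
  | zero => exact ⟨0, by simp⟩
  | add a b _ _ ha hb =>
      obtain ⟨p, hp⟩ := ha; obtain ⟨q, hq⟩ := hb
      exact ⟨p + q, by simp [hp, hq]⟩
  | smul c a _ ha =>
      obtain ⟨p, hp⟩ := ha
      exact ⟨c • p, by simp [hp]⟩

lemma hilden [CompleteSpace W] (B : W →L[ℂ] W) (hB : IsCompactOperator (⇑B))
    (hrad : spectralRadius ℂ B = 0) (hB0 : B ≠ 0)
    (hdense : ∀ y : W, y ≠ 0 →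
      Dense ((Submodule.span ℂ (Set.range fun n : ℕ => (B ^ n) y) : Submodule ℂ W) : Set W)) :
    False := by
  obtain ⟨x₀, hx₀⟩ : ∃ x, B x ≠ 0 := by
    by_contra h; push_neg at h
    exact hB0 (ContinuousLinearMap.ext fun x => by simp [h x])
  haveI : Nontrivial W := ⟨⟨B x₀, 0, hx₀⟩⟩
  have hx₀0 : x₀ ≠ 0 := fun h => hx₀ (by simp [h])
  have hx₀n : (0:ℝ) < ‖x₀‖ := norm_pos_iff.mpr hx₀0
  set r : ℝ := ‖B x₀‖ / (2 * (‖B‖ + 1)) with hrdef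
  have hBnn : (0:ℝ) ≤ ‖B‖ := norm_nonneg _
  have hr0 : 0 < r := by
    apply div_pos (norm_pos_iff.mpr hx₀)
    positivity
  have hrle : r ≤ ‖x₀‖ / 2 := by
    rw [hrdef, div_le_div_iff₀ (by positivity) (by norm_num)]
    calc ‖B x₀‖ * 2 ≤ (‖B‖ * ‖x₀‖) * 2 :=
          mul_le_mul_of_nonneg_right (B.le_opNorm x₀) (by norm_num)
      _ ≤ ‖x₀‖ * (2 * (‖B‖ + 1)) := by nlinarith
  -- lower bound for images of the closed ball
  have hlow : ∀ y ∈ Metric.closedBall x₀ r, ‖B x₀‖ / 2 ≤ ‖B y‖ := by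
    intro y hy
    rw [Metric.mem_closedBall, dist_eq_norm] at hy
    have h1 : ‖B y - B x₀‖ ≤ ‖B‖ * r := by
      rw [← map_sub]
      calc ‖B (y - x₀)‖ ≤ ‖B‖ * ‖y - x₀‖ := B.le_opNorm _
        _ ≤ ‖B‖ * r := mul_le_mul_of_nonneg_left hy hBnn
    have h2 : ‖B‖ * r ≤ ‖B x₀‖ / 2 := by
      rw [hrdef, mul_div_assoc']
      rw [div_le_div_iff₀ (by positivity) (by norm_num)]
      nlinarith [norm_nonneg (B x₀)]
    have h3 : ‖B x₀‖ - ‖B y‖ ≤ ‖B y - B x₀‖ := by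
      have := norm_sub_norm_le (B x₀) (B y)
      rw [norm_sub_rev] at this
      linarith
    linarith
  set C : Set W := closure (⇑B '' Metric.closedBall x₀ r) with hCdef
  have hCcomp : IsCompact C := by
    apply hB.isCompact_closure_image_of_bounded
    exact Metric.isBounded_closedBall
  have hCne : ∀ y ∈ C, y ≠ 0 := by
    intro y hy
    have hsub : C ⊆ {z : W | ‖B x₀‖ / 2 ≤ ‖z‖} := by
      apply closure_minimal
      · rintro _ ⟨w, hw, rfl⟩; exact hlow w hw
      · exact isClosed_le continuous_const continuous_norm
    intro h0
    have h1 := hsub hy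
    rw [h0] at h1
    simp only [Set.mem_setOf_eq, norm_zero] at h1
    have h2 : (0:ℝ) < ‖B x₀‖ := norm_pos_iff.mpr hx₀
    linarith
  -- the open cover of C by polynomial preimages
  set U : ℂ[X] → Set W := fun p => (⇑(aeval (R := ℂ) B p)) ⁻¹' Metric.ball x₀ r with hUdef
  have hUopen : ∀ p, IsOpen (U p) :=
    fun p => Metric.isOpen_ball.preimage (aeval (R := ℂ) B p).continuous
  have hUcover : C ⊆ ⋃ p : ℂ[X], U p := by
    intro y hy
    have hy0 := hCne y hy
    have hd := hdense y hy0
    obtain ⟨v, hv, hvd⟩ := Metric.mem_closure_iff.mp (hd x₀) r hr0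
    obtain ⟨p, hp⟩ := orbit_poly (B := B) (y := y) hv
    refine Set.mem_iUnion.mpr ⟨p, ?_⟩
    simp only [hUdef, Set.mem_preimage, Metric.mem_ball, hp]
    rw [dist_comm] at hvd
    exact hvd
  obtain ⟨t, ht⟩ := hCcomp.elim_finite_subcover U hUopen hUcover
  set c : ℝ := 1 + ∑ p ∈ t, ‖(aeval (R := ℂ) B p : W →L[ℂ] W)‖ with hcdef
  have hc1 : (1:ℝ) ≤ c := by
    rw [hcdef]
    have : (0:ℝ) ≤ ∑ p ∈ t, ‖(aeval (R := ℂ) B p : W →L[ℂ] W)‖ :=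
      Finset.sum_nonneg fun p _ => norm_nonneg _
    linarith
  have hc0 : (0:ℝ) < c := lt_of_lt_of_le one_pos hc1
  have hcp : ∀ p ∈ t, ‖(aeval (R := ℂ) B p : W →L[ℂ] W)‖ ≤ c := by
    intro p hp
    rw [hcdef]
    have := Finset.single_le_sum (f := fun q => ‖(aeval (R := ℂ) B q : W →L[ℂ] W)‖)
      (fun q _ => norm_nonneg _) hp
    linarith
  -- the recursive construction
  have key : ∀ m : ℕ, ∃ T : W →L[ℂ] W,
      T * B = B * T ∧ ‖T‖ ≤ c ^ m ∧ T ((B ^ m) x₀) ∈ Metric.ball x₀ r := by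
    intro m
    induction m with
    | zero =>
        refine ⟨1, by rw [one_mul, mul_one], ?_, ?_⟩
        · rw [pow_zero, ContinuousLinearMap.one_def]
          exact ContinuousLinearMap.norm_id_le
        · simp only [pow_zero, ContinuousLinearMap.one_apply]
          exact Metric.mem_ball_self hr0
    | succ m ih =>
        obtain ⟨T, hTB, hTn, hTb⟩ := ih
        set x := T ((B ^ m) x₀) with hxdef
        have hxC : B x ∈ C := subset_closure ⟨x, Metric.ball_subset_closedBall hTb, rfl⟩
        obtain ⟨p, hpt, hpU⟩ := Set.mem_iUnion₂.mp (ht hxC)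
        refine ⟨aeval (R := ℂ) B p * T, ?_, ?_, ?_⟩
        · have hcomm : (aeval (R := ℂ) B p) * B = B * (aeval (R := ℂ) B p) := by
            calc aeval (R := ℂ) B p * B = aeval (R := ℂ) B p * aeval (R := ℂ) B X := by
                  rw [aeval_X]
              _ = aeval (R := ℂ) B (p * X) := (map_mul _ _ _).symm
              _ = aeval (R := ℂ) B (X * p) := by rw [mul_comm]
              _ = B * aeval (R := ℂ) B p := by rw [map_mul, aeval_X]
          calc aeval (R := ℂ) B p * T * B = aeval (R := ℂ) B p * (T * B) := by
                rw [mul_assoc]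
            _ = aeval (R := ℂ) B p * (B * T) := by rw [hTB]
            _ = (aeval (R := ℂ) B p * B) * T := by rw [mul_assoc]
            _ = (B * aeval (R := ℂ) B p) * T := by rw [hcomm]
            _ = B * (aeval (R := ℂ) B p * T) := by rw [mul_assoc]
        · calc ‖aeval (R := ℂ) B p * T‖ ≤ ‖(aeval (R := ℂ) B p : W →L[ℂ] W)‖ * ‖T‖ :=
                norm_mul_le _ _
            _ ≤ c * c ^ m := mul_le_mul (hcp p hpt) hTn (norm_nonneg _) hc0.le
            _ = c ^ (m + 1) := (pow_succ' c m).symm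
        · have hstep : T ((B ^ (m + 1)) x₀) = B x := by
            have h := congrArg (fun S : W →L[ℂ] W => S ((B ^ m) x₀)) hTB
            simp only [ContinuousLinearMap.mul_apply] at h
            rw [pow_succ']
            simpa [ContinuousLinearMap.mul_apply, hxdef] using h
          rw [ContinuousLinearMap.mul_apply, hstep]
          exact hpU
  -- Gelfand's formula gives the contradiction
  have hgel : Filter.Tendsto (fun n : ℕ => ENNReal.ofReal (‖B ^ n‖ ^ (1 / n : ℝ)))
      atTop (𝓝 0) := by
    have := spectrum.pow_norm_pow_one_div_tendsto_nhds_spectralRadius B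
    rwa [hrad] at this
  have hsmall : ∀ᶠ n : ℕ in atTop,
      ENNReal.ofReal (‖B ^ n‖ ^ (1 / n : ℝ)) < ENNReal.ofReal (1 / (2 * c)) :=
    hgel.eventually_lt_const (ENNReal.ofReal_pos.mpr (one_div_pos.mpr (by linarith)))
  obtain ⟨n, hsm, hn2⟩ := (hsmall.and (eventually_ge_atTop 2)).exists
  have h1 : ‖B ^ n‖ ^ (1 / n : ℝ) < 1 / (2 * c) :=
    (ENNReal.ofReal_lt_ofReal_iff (one_div_pos.mpr (by linarith))).mp hsm
  have hb0 : (0:ℝ) ≤ ‖B ^ n‖ := norm_nonneg _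
  have hn0 : (n:ℝ) ≠ 0 := by
    have : (0:ℕ) < n := lt_of_lt_of_le (by norm_num) hn2
    exact_mod_cast this.ne'
  have h2 : ‖B ^ n‖ = (‖B ^ n‖ ^ (1 / n : ℝ)) ^ n := by
    rw [← Real.rpow_natCast (‖B ^ n‖ ^ (1 / n : ℝ)) n, ← Real.rpow_mul hb0,
      one_div, inv_mul_cancel₀ hn0, Real.rpow_one]
  have h3 : ‖B ^ n‖ < (1 / (2 * c)) ^ n := by
    rw [h2]
    exact pow_lt_pow_left₀ h1 (Real.rpow_nonneg hb0 _) (by omega)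
  obtain ⟨T, hTB, hTn, hTb⟩ := key n
  have hup : ‖T ((B ^ n) x₀)‖ ≤ c ^ n * (‖B ^ n‖ * ‖x₀‖) :=
    calc ‖T ((B ^ n) x₀)‖ ≤ ‖T‖ * ‖(B ^ n) x₀‖ := T.le_opNorm _
      _ ≤ c ^ n * (‖B ^ n‖ * ‖x₀‖) :=
        mul_le_mul hTn ((B ^ n).le_opNorm x₀) (norm_nonneg _) (pow_nonneg hc0.le n)
  have hlb : ‖x₀‖ - r ≤ ‖T ((B ^ n) x₀)‖ := by
    have h4 := Metric.mem_ball.mp hTb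
    rw [dist_eq_norm] at h4
    have h5 := norm_sub_norm_le x₀ (T ((B ^ n) x₀))
    rw [norm_sub_rev] at h5
    linarith
  have hc' : c ^ n * ‖B ^ n‖ < (1 / 2 : ℝ) ^ n := by
    calc c ^ n * ‖B ^ n‖ < c ^ n * (1 / (2 * c)) ^ n :=
          mul_lt_mul_of_pos_left h3 (pow_pos hc0 n)
      _ = (c * (1 / (2 * c))) ^ n := (mul_pow _ _ _).symm
      _ = (1 / 2 : ℝ) ^ n := by
          congr 1
          field_simp
  have hhalf : ((1:ℝ) / 2) ^ n ≤ 1 / 4 := by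
    calc ((1:ℝ) / 2) ^ n ≤ (1 / 2) ^ 2 :=
          pow_le_pow_of_le_one (by norm_num) (by norm_num) hn2
      _ = 1 / 4 := by norm_num
  have final1 : ‖T ((B ^ n) x₀)‖ < (1 / 4) * ‖x₀‖ := by
    calc ‖T ((B ^ n) x₀)‖ ≤ c ^ n * ‖B ^ n‖ * ‖x₀‖ := by rw [mul_assoc]; exact hup
      _ < (1 / 2 : ℝ) ^ n * ‖x₀‖ := mul_lt_mul_of_pos_right hc' hx₀n
      _ ≤ (1 / 4) * ‖x₀‖ := mul_le_mul_of_nonneg_right hhalf hx₀n.le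
  linarith

lemma exists_invariant [CompleteSpace W] (B : W →L[ℂ] W) (hB : IsCompactOperator (⇑B))
    (hrank : 1 < Module.rank ℂ W) :
    ∃ M : Submodule ℂ W, IsClosed (M : Set W) ∧ (∀ x ∈ M, B x ∈ M) ∧ M ≠ ⊥ ∧ M ≠ ⊤ := by
  haveI : Nontrivial W := rank_pos_iff_nontrivial.mp (lt_trans zero_lt_one hrank)
  have span_closed : ∀ y : W, IsClosed ((Submodule.span ℂ {y} : Submodule ℂ W) : Set W) :=
    fun y => (Submodule.span ℂ {y}).closed_of_finiteDimensional
  have span_inv : ∀ (y : W) (lam : ℂ), B y = lam • y →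
      ∀ x ∈ Submodule.span ℂ {y}, B x ∈ Submodule.span ℂ {y} := by
    intro y lam hy x hx
    obtain ⟨a, rfl⟩ := Submodule.mem_span_singleton.mp hx
    rw [map_smul, hy, smul_smul]
    exact Submodule.smul_mem _ _ (Submodule.mem_span_singleton_self y)
  have span_ne_bot : ∀ y : W, y ≠ 0 → (Submodule.span ℂ {y} : Submodule ℂ W) ≠ ⊥ := by
    intro y hy0 h
    have hy : y ∈ (Submodule.span ℂ {y} : Submodule ℂ W) := Submodule.mem_span_singleton_self y
    rw [h] at hy
    exact hy0 (Submodule.mem_bot ℂ |>.mp hy)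
  by_cases hd : ∀ y : W, y ≠ 0 →
      Dense ((Submodule.span ℂ (Set.range fun n : ℕ => (B ^ n) y) : Submodule ℂ W) : Set W)
  · by_cases hs : ∃ lam : ℂ, lam ≠ 0 ∧ lam ∈ spectrum ℂ B
    · obtain ⟨lam, hne, hmem⟩ := hs
      rcases eigen_dichotomy B hB hne hmem with ⟨y, hy0, hyev⟩ | hM
      · exact ⟨Submodule.span ℂ {y}, span_closed y, span_inv y lam hyev,
          span_ne_bot y hy0, span_singleton_ne_top hrank⟩
      · exact hM
    · push_neg at hs
      have hrad : spectralRadius ℂ B = 0 := by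
        refine le_antisymm ?_ zero_le
        rw [spectralRadius]
        refine iSup₂_le fun k hk => ?_
        have hk0 : k = 0 := by
          by_contra h
          exact hs k h hk
        simp [hk0]
      by_cases hB0 : B = 0
      · obtain ⟨y, hy0⟩ := exists_ne (0 : W)
        refine ⟨Submodule.span ℂ {y}, span_closed y, ?_,
          span_ne_bot y hy0, span_singleton_ne_top hrank⟩
        intro x hx
        rw [hB0]
        simp
      · exact (hilden B hB hrad hB0 hd).elim
  · push_neg at hd
    obtain ⟨y, hy0, hnd⟩ := hd
    set p := Submodule.span ℂ (Set.range fun n : ℕ => (B ^ n) y) with hpdef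
    refine ⟨p.topologicalClosure, p.isClosed_topologicalClosure, ?_, ?_, ?_⟩
    · exact closure_invariant B p (orbit_invariant B y)
    · intro h
      have hyp : y ∈ p := Submodule.subset_span ⟨0, by simp⟩
      have : y ∈ p.topologicalClosure := p.le_topologicalClosure hyp
      rw [h] at this
      exact hy0 (Submodule.mem_bot ℂ |>.mp this)
    · intro h
      exact hnd (Submodule.dense_iff_topologicalClosure_eq_top.mpr h)

end Aux

/-- Every compact operator on a complex separable Hilbert space belongs to the
class T: between any two closed invariant subspaces `H₁ ⊆ H₂` with
`dim(H₂ ⊖ H₁) > 1` there is a strictly intermediate closed invariant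
subspace. -/
theorem stmt_11 {H : Type*} [NormedAddCommGroup H] [InnerProductSpace ℂ H]
    [CompleteSpace H] [TopologicalSpace.SeparableSpace H]
    (A : H →L[ℂ] H) (hA : IsCompactOperator (⇑A)) :
    ∀ H₁ H₂ : Submodule ℂ H,
      IsClosed (H₁ : Set H) → IsClosed (H₂ : Set H) →
      (∀ x ∈ H₁, A x ∈ H₁) → (∀ x ∈ H₂, A x ∈ H₂) →
      H₁ ≤ H₂ → 1 < Module.rank ℂ ↥(H₂ ⊓ H₁ᗮ) →
      ∃ H₃ : Submodule ℂ H, IsClosed (H₃ : Set H) ∧ (∀ x ∈ H₃, A x ∈ H₃) ∧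
        H₁ ≤ H₃ ∧ H₃ ≤ H₂ ∧ H₃ ≠ H₁ ∧ H₃ ≠ H₂ := by
  intro H₁ H₂ h₁c h₂c h₁i h₂i hle hrank
  set K : Submodule ℂ H := H₂ ⊓ H₁ᗮ with hKdef
  have hKc : IsClosed (K : Set H) := by
    rw [hKdef, Submodule.coe_inf]
    exact h₂c.inter H₁.isClosed_orthogonal
  haveI : CompleteSpace K := hKc.completeSpace_coe
  haveI : CompleteSpace H₁ := h₁c.completeSpace_coe
  have hKH₂ : K ≤ H₂ := inf_le_left
  have hKH₁o : K ≤ H₁ᗮ := inf_le_right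
  set B : K →L[ℂ] K := (orthogonalProjection K).comp (A.comp K.subtypeL) with hBdef
  have hBapp : ∀ mk : K, (B mk : H) = (orthogonalProjection K (A (mk : H)) : H) := by
    intro mk; rfl
  have hBcpt : IsCompactOperator (⇑B) := by
    have h1 : IsCompactOperator (⇑A ∘ ⇑K.subtypeL) := hA.comp_clm K.subtypeL
    have h2 := h1.continuous_comp (orthogonalProjection K).continuous
    exact h2
  -- the key inclusion H₂ ⊓ Kᗮ ≤ H₁
  have h2K1 : ∀ x ∈ H₂, x ∈ Kᗮ → x ∈ H₁ := by
    intro x hx2 hxK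
    set y : H := x - (orthogonalProjection H₁ x : H) with hydef
    have hy1 : y ∈ H₁ᗮ := H₁.sub_starProjection_mem_orthogonal x
    have hy2 : y ∈ H₂ := Submodule.sub_mem _ hx2 (hle (orthogonalProjection H₁ x).2)
    have hyK : y ∈ K := ⟨hy2, hy1⟩
    have hinner1 : inner ℂ y x = (0:ℂ) :=
      Submodule.inner_right_of_mem_orthogonal hyK hxK
    have hinner2 : inner ℂ y ((orthogonalProjection H₁ x : H)) = (0:ℂ) :=
      Submodule.inner_left_of_mem_orthogonal (orthogonalProjection H₁ x).2 hy1
    have hyy : inner ℂ y y = (0:ℂ) := by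
      rw [hydef]
      rw [inner_sub_right]
      rw [← hydef, hinner1, hinner2, sub_zero]
    have hy0 : y = 0 := inner_self_eq_zero.mp hyy
    have : x = (orthogonalProjection H₁ x : H) := by
      have := sub_eq_zero.mp (hydef ▸ hy0)
      exact this
    rw [this]
    exact (orthogonalProjection H₁ x).2
  obtain ⟨M, hMc, hMi, hMbot, hMtop⟩ := exists_invariant B hBcpt hrank
  set M' : Submodule ℂ H := M.map K.subtype with hM'def
  have hM'K : M' ≤ K := Submodule.map_subtype_le K M
  set S : Submodule ℂ H := H₁ ⊔ M' with hSdef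
  have hSinv : ∀ x ∈ S, A x ∈ S := by
    intro x hx
    obtain ⟨a, ha, b, hb, rfl⟩ := Submodule.mem_sup.mp hx
    rw [map_add]
    apply Submodule.add_mem
    · exact le_sup_left (α := Submodule ℂ H) (h₁i a ha)
    · obtain ⟨mk, hmk, rfl⟩ := hb
      have hAb2 : A (mk : H) ∈ H₂ := h₂i _ (hKH₂ mk.2)
      rw [Submodule.subtype_apply]
      have hdecomp : A (mk : H) =
          (A (mk : H) - (orthogonalProjection K (A (mk : H)) : H)) +
            (orthogonalProjection K (A (mk : H)) : H) := by abel
      rw [hdecomp]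
      apply Submodule.add_mem
      · apply le_sup_left (α := Submodule ℂ H)
        apply h2K1
        · exact Submodule.sub_mem _ hAb2 (hKH₂ (orthogonalProjection K (A (mk : H))).2)
        · exact K.sub_starProjection_mem_orthogonal _
      · apply le_sup_right (α := Submodule ℂ H)
        refine ⟨B mk, hMi mk hmk, ?_⟩
        exact (hBapp mk).symm
  refine ⟨S.topologicalClosure, S.isClosed_topologicalClosure, ?_, ?_, ?_, ?_, ?_⟩
  · exact closure_invariant A S hSinv
  · exact le_trans le_sup_left S.le_topologicalClosure
  · apply Submodule.topologicalClosure_minimal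
    · exact sup_le hle (le_trans hM'K hKH₂)
    · exact h₂c
  · -- H₃ ≠ H₁
    obtain ⟨mk, hmk, hmk0⟩ := Submodule.exists_mem_ne_zero_of_ne_bot hMbot
    intro hEq
    have hm3 : (mk : H) ∈ S.topologicalClosure :=
      S.le_topologicalClosure (le_sup_right (α := Submodule ℂ H) ⟨mk, hmk, rfl⟩)
    rw [hEq] at hm3
    have hm1o : (mk : H) ∈ H₁ᗮ := hKH₁o mk.2
    have : (mk : H) ∈ (⊥ : Submodule ℂ H) :=
      (Submodule.orthogonal_disjoint H₁).le_bot ⟨hm3, hm1o⟩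
    rw [Submodule.mem_bot] at this
    exact hmk0 (Subtype.coe_injective (by simpa using this))
  · -- H₃ ≠ H₂
    haveI : CompleteSpace M := hMc.completeSpace_coe
    have hMo : Mᗮ ≠ ⊥ := fun h => hMtop (Submodule.orthogonal_eq_bot_iff.mp h)
    obtain ⟨w, hw, hw0⟩ := Submodule.exists_mem_ne_zero_of_ne_bot hMo
    intro hEq
    have hwS : (w : H) ∈ Sᗮ := by
      intro u hu
      obtain ⟨a, ha, b, hb, rfl⟩ := Submodule.mem_sup.mp hu
      rw [inner_add_left]
      have h1 : inner ℂ a ((w : H)) = (0:ℂ) :=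
        Submodule.inner_right_of_mem_orthogonal ha (hKH₁o w.2)
      have h2 : inner ℂ b ((w : H)) = (0:ℂ) := by
        obtain ⟨mk, hmk, rfl⟩ := hb
        have h3 : (inner ℂ mk w : ℂ) = 0 := Submodule.inner_right_of_mem_orthogonal hmk hw
        rw [Submodule.subtype_apply, ← Submodule.coe_inner]
        exact h3
      rw [h1, h2, add_zero]
    have hwC : (w : H) ∈ S.topologicalClosure := by
      rw [hEq]
      exact hKH₂ w.2
    have hCle : S.topologicalClosure ≤ Sᗮᗮ :=
      Submodule.topologicalClosure_minimal _ S.le_orthogonal_orthogonal Sᗮ.isClosed_orthogonal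
    have : (w : H) ∈ (⊥ : Submodule ℂ H) :=
      (Submodule.orthogonal_disjoint Sᗮ).le_bot ⟨hwS, hCle hwC⟩
    rw [Submodule.mem_bot] at this
    exact hw0 (Subtype.coe_injective (by simpa using this))
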